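/- The converse of the difference proportion fails: in (ℤ, +, −, ℤ), for all integers a and c the proportion a : 2a :: c : 2c holds (justified by z → z + z), whereas 2a − a = 2c − c holds iff a = c. Hence there exist a, b, c, d with ⊨ a:b::c:d but b − a ≠ d − c. -/

import Mathlib

/- Analogical proportions (Antić): single-variable terms over a language of algebras. -/

/-- A term over a language with function symbols `F` of arities `ar`, in the single variable `z`.
Constant symbols are function symbols of arity 0. -/
inductive Term (F : Type*) (ar : F → ℕ) : Type _ where
  | var : Term F ar
  | app : (f : F) → (Fin (ar f) → Term F ar) → Term F ar

/-- An algebra for the language `(F, ar)` with universe `A`. -/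
structure Alg (F : Type*) (ar : F → ℕ) (A : Type*) where
  interp : (f : F) → (Fin (ar f) → A) → A

variable {F : Type*} {ar : F → ℕ} {A B : Type*}

/-- Evaluation of a term at `z := x`. -/
def Term.eval (𝔸 : Alg F ar A) (x : A) : Term F ar → A
  | .var => x
  | .app f ts => 𝔸.interp f fun i => (ts i).eval 𝔸 x

/-- The set of justifications `s → t` of a pair `(a, b)` in the algebra `𝔸`:
pairs of terms such that `a = s(e)` and `b = t(e)` for some witness `e`. -/
def Jus (𝔸 : Alg F ar A) (a b : A) : Set (Term F ar × Term F ar) :=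
  {p | ∃ e : A, p.1.eval 𝔸 e = a ∧ p.2.eval 𝔸 e = b}

/-- Justifications of `a : b :: c : d` in `(𝔸, 𝔹)`. -/
def JusP (𝔸 : Alg F ar A) (𝔹 : Alg F ar B) (a b : A) (c d : B) :
    Set (Term F ar × Term F ar) :=
  Jus 𝔸 a b ∩ Jus 𝔹 c d

/-- `(𝔸, 𝔹) ⊨ a : b :: c : d`: the set of justifications is subset-maximal w.r.t. `d`. -/
def Proportion (𝔸 : Alg F ar A) (𝔹 : Alg F ar B) (a b : A) (c d : B) : Prop :=
  ∀ d' : B, JusP 𝔸 𝔹 a b c d ⊆ JusP 𝔸 𝔹 a b c d' →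
    JusP 𝔸 𝔹 a b c d' ⊆ JusP 𝔸 𝔹 a b c d

/-- `j` is a characteristic justification of `a : b :: c : d` in `(𝔸, 𝔹)`. -/
def CharJus (𝔸 : Alg F ar A) (𝔹 : Alg F ar B) (a b : A) (c d : B)
    (j : Term F ar × Term F ar) : Prop :=
  j ∈ JusP 𝔸 𝔹 a b c d ↔ Proportion 𝔸 𝔹 a b c d

/-- The language of `(ℤ, +, −, ℤ)`: addition, negation, and a constant symbol
for every integer. -/
inductive ZSym : Type | plus | neg | const : ℤ → ZSym
def zAr : ZSym → ℕ | .plus => 2 | .neg => 1 | .const _ => 0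

/-- The algebra `(ℤ, +, −, ℤ)`. -/
def ZAlg : Alg ZSym zAr ℤ :=
  ⟨fun f => match f with
    | .plus => fun v => v ⟨0, Nat.zero_lt_two⟩ + v ⟨1, Nat.one_lt_two⟩
    | .neg => fun v => -(v ⟨0, Nat.zero_lt_one⟩)
    | .const k => fun _ => k⟩

/-- The constant term `k`. -/
def constT (k : ℤ) : Term ZSym zAr := Term.app (.const k) (fun i => i.elim0)
/-- The sum `s + t` as a term. -/
def plusT (s t : Term ZSym zAr) : Term ZSym zAr := Term.app .plus (![s, t] : Fin 2 → _)
/-- The negation `−t` as a term. -/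
def negT (t : Term ZSym zAr) : Term ZSym zAr := Term.app .neg (fun _ => t)
/-- The term `n·t = t + ⋯ + t` (`n` times) for natural `n`. -/
def nsmulT : ℕ → Term ZSym zAr → Term ZSym zAr
  | 0, _ => constT 0
  | n + 1, t => plusT (nsmulT n t) t
/-- The term `k·t` for an integer `k` (negation of a repeated sum for `k < 0`). -/
def zsmulT (k : ℤ) (t : Term ZSym zAr) : Term ZSym zAr :=
  if 0 ≤ k then nsmulT k.toNat t else negT (nsmulT (-k).toNat t)
/-- The affine term `k·z + ℓ`. -/
def linT (k l : ℤ) : Term ZSym zAr := plusT (zsmulT k Term.var) (constT l)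

/-- the converse of the difference proportion fails: for all
integers `a, c` the proportion `a : 2a :: c : 2c` holds (justified by
`z → z + z`), whereas `2a − a = 2c − c` iff `a = c`; hence there are
`a, b, c, d` with `⊨ a:b::c:d` but `b − a ≠ d − c`. -/
theorem difference_converse_fails :
    (∀ a c : ℤ,
      Proportion ZAlg ZAlg a (2 * a) c (2 * c) ∧
      (Term.var, plusT Term.var Term.var) ∈ JusP ZAlg ZAlg a (2 * a) c (2 * c) ∧
      (2 * a - a = 2 * c - c ↔ a = c)) ∧
    ∃ a b c d : ℤ, Proportion ZAlg ZAlg a b c d ∧ b - a ≠ d - c := by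

  have hj : ∀ x : ℤ, (Term.var, plusT Term.var Term.var) ∈ Jus ZAlg x (2 * x) := by
    intro x
    exact ⟨x, rfl, by show x + x = 2 * x; ring⟩
  have hprop : ∀ a c : ℤ, Proportion ZAlg ZAlg a (2 * a) c (2 * c) := by
    intro a c d' h
    have hmem : (Term.var, plusT Term.var Term.var) ∈ JusP ZAlg ZAlg a (2 * a) c d' :=
      h ⟨hj a, hj c⟩
    obtain ⟨-, e, he1, he2⟩ := hmem
    have : d' = 2 * c := by
      simp [Term.eval] at he1
      change e + e = d' at he2
      omega
    rw [this]
  constructor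
  · intro a c
    exact ⟨hprop a c, ⟨hj a, hj c⟩, by constructor <;> intro h <;> omega⟩
  · exact ⟨0, 0, 1, 2, hprop 0 1, by norm_num⟩
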